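/- arXiv:2505.02962 — 2 statements merged into one kernel-verified Lean document; each statement's English description precedes it below -/
import Mathlib

section
/- Let U ⊆ ℝ² be open and w : U → ℝ a smooth solution of the reduced equation. Write ζ := ∂₁∂₂w + ½(∂₂²w)² and θ⁰ := z₂ − z₁·∂₂²w. Then each of the following functions γ on U satisfies the cosymmetry condition ∂₂²(∂₁γ + (∂₂²w)·∂₂γ) = 0 on U: (i) γ = ∂₂w − ½z₁(∂₂²w)²; (ii) γ = (∂₂w − ½z₁(∂₂²w)²)·∂₂²w − z₂·ζ; (iii) γ = ∂₁w − z₂·ζ + (1/6)z₁(∂₂²w)³; (iv) γ = z₁(∂₁w − z₂·ζ) + z₂·∂₂w − w + (1/12)z₁²(∂₂²w)³ − ¼z₂²·∂₂²w; (v) γ = (∂₂w − ½z₁(∂₂²w)²)·θ⁰ + z₁z₂·ζ. -/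
/-- First-coordinate partial derivative of a function on `ℝ²`. -/
noncomputable def d1 (f : ℝ × ℝ → ℝ) (p : ℝ × ℝ) : ℝ := deriv (fun s => f (s, p.2)) p.1

/-- Second-coordinate partial derivative of a function on `ℝ²`. -/
noncomputable def d2 (f : ℝ × ℝ → ℝ) (p : ℝ × ℝ) : ℝ := deriv (fun s => f (p.1, s)) p.2

/-- `w` is a smooth solution of the reduced equation `∂₁∂₂²w + (∂₂²w)·(∂₂³w) = 0` on `U`. -/
def IsRedSolOn (w : ℝ × ℝ → ℝ) (U : Set (ℝ × ℝ)) : Prop :=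
  ContDiffOn ℝ (⊤ : ℕ∞) w U ∧
    ∀ p ∈ U, d1 (d2 (d2 w)) p + d2 (d2 w) p * d2 (d2 (d2 w)) p = 0

/-- `h` is a smooth solution of the inviscid Burgers equation `∂₁h + h·∂₂h = 0` on `U`. -/
def IsBurgersSolOn (h : ℝ × ℝ → ℝ) (U : Set (ℝ × ℝ)) : Prop :=
  ContDiffOn ℝ (⊤ : ℕ∞) h U ∧ ∀ p ∈ U, d1 h p + h p * d2 h p = 0

/-- The lowest-order `z₂`-integral `ζ = ∂₁∂₂w + ½(∂₂²w)²` of the reduced equation. -/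
noncomputable def zetaInt (w : ℝ × ℝ → ℝ) (p : ℝ × ℝ) : ℝ :=
  d1 (d2 w) p + (1 / 2) * (d2 (d2 w) p) ^ 2

/-- `θ⁰ = z₂ − z₁·∂₂²w`. -/
noncomputable def theta0 (w : ℝ × ℝ → ℝ) (p : ℝ × ℝ) : ℝ := p.2 - p.1 * d2 (d2 w) p

/-- `θ¹ = ∂₂²w/∂₁∂₂²w + z₁`. -/
noncomputable def theta1 (w : ℝ × ℝ → ℝ) (p : ℝ × ℝ) : ℝ :=
  d2 (d2 w) p / d1 (d2 (d2 w)) p + p.1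

/-- `θ² = (∂₂²w/∂₁∂₂²w)·∂₂θ¹`. -/
noncomputable def theta2 (w : ℝ × ℝ → ℝ) (p : ℝ × ℝ) : ℝ :=
  d2 (d2 w) p / d1 (d2 (d2 w)) p * d2 (theta1 w) p

/-- `f` satisfies the generalized-symmetry condition
`∂₂(∂₁(∂₂f) + (∂₂²w)·∂₂(∂₂f)) = 0` of the reduced equation along the solution `w` on `U`. -/
def IsGenSymCharOn (w f : ℝ × ℝ → ℝ) (U : Set (ℝ × ℝ)) : Prop :=
  ∀ p ∈ U, d2 (fun q => d1 (d2 f) q + d2 (d2 w) q * d2 (d2 f) q) p = 0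

/-- `γ` satisfies the cosymmetry condition `∂₂²(∂₁γ + (∂₂²w)·∂₂γ) = 0` of the reduced
equation along the solution `w` on `U`. -/
def IsCosymOn (w γ : ℝ × ℝ → ℝ) (U : Set (ℝ × ℝ)) : Prop :=
  ∀ p ∈ U, d2 (d2 (fun q => d1 γ q + d2 (d2 w) q * d2 γ q)) p = 0




open Filter Topology

section Toolkit
variable {U : Set (ℝ × ℝ)} {f g : ℝ × ℝ → ℝ} {p : ℝ × ℝ}

lemma ev1 (hU : IsOpen U) (hp : p ∈ U) : ∀ᶠ s in 𝓝 p.1, (s, p.2) ∈ U := by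
  have : Continuous (fun s : ℝ => (s, p.2)) := continuous_id.prodMk continuous_const
  have := this.continuousAt (x := p.1) |>.preimage_mem_nhds (hU.mem_nhds (by simpa using hp))
  exact this

lemma ev2 (hU : IsOpen U) (hp : p ∈ U) : ∀ᶠ t in 𝓝 p.2, (p.1, t) ∈ U := by
  have : Continuous (fun t : ℝ => (p.1, t)) := continuous_const.prodMk continuous_id
  exact this.continuousAt (x := p.2) |>.preimage_mem_nhds (hU.mem_nhds (by simpa using hp))

lemma diffAt (hU : IsOpen U) (hf : ContDiffOn ℝ (⊤ : ℕ∞) f U) (hp : p ∈ U) :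
    DifferentiableAt ℝ f p :=
  (hf.contDiffAt (hU.mem_nhds hp)).differentiableAt (by decide)

lemma hasDeriv1 (hU : IsOpen U) (hf : ContDiffOn ℝ (⊤ : ℕ∞) f U) (hp : p ∈ U) :
    HasDerivAt (fun s => f (s, p.2)) (fderiv ℝ f p (1, 0)) p.1 := by
  have hfd : HasFDerivAt f (fderiv ℝ f p) p := (diffAt hU hf hp).hasFDerivAt
  have hL : HasDerivAt (fun s : ℝ => (s, p.2)) ((1 : ℝ), (0 : ℝ)) p.1 :=
    (hasDerivAt_id p.1).prodMk (hasDerivAt_const p.1 p.2)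
  exact hfd.comp_hasDerivAt p.1 hL

lemma hasDeriv2 (hU : IsOpen U) (hf : ContDiffOn ℝ (⊤ : ℕ∞) f U) (hp : p ∈ U) :
    HasDerivAt (fun t => f (p.1, t)) (fderiv ℝ f p (0, 1)) p.2 := by
  have hfd : HasFDerivAt f (fderiv ℝ f p) p := (diffAt hU hf hp).hasFDerivAt
  have hL : HasDerivAt (fun t : ℝ => (p.1, t)) ((0 : ℝ), (1 : ℝ)) p.2 :=
    (hasDerivAt_const p.2 p.1).prodMk (hasDerivAt_id p.2)
  exact hfd.comp_hasDerivAt p.2 hL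

lemma hasD1 (hU : IsOpen U) (hf : ContDiffOn ℝ (⊤ : ℕ∞) f U) (hp : p ∈ U) :
    HasDerivAt (fun s => f (s, p.2)) (d1 f p) p.1 := by
  have h := hasDeriv1 hU hf hp
  have : d1 f p = fderiv ℝ f p (1, 0) := h.deriv
  rw [this]; exact h

lemma hasD2 (hU : IsOpen U) (hf : ContDiffOn ℝ (⊤ : ℕ∞) f U) (hp : p ∈ U) :
    HasDerivAt (fun t => f (p.1, t)) (d2 f p) p.2 := by
  have h := hasDeriv2 hU hf hp
  have : d2 f p = fderiv ℝ f p (0, 1) := h.deriv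
  rw [this]; exact h

lemma smooth_d1 (hU : IsOpen U) (hf : ContDiffOn ℝ (⊤ : ℕ∞) f U) :
    ContDiffOn ℝ (⊤ : ℕ∞) (d1 f) U := by
  have h1 : ContDiffOn ℝ (⊤ : ℕ∞) (fun q => fderiv ℝ f q (1, 0)) U :=
    (hf.fderiv_of_isOpen hU le_rfl).clm_apply contDiffOn_const
  exact h1.congr fun q hq => (hasDeriv1 hU hf hq).deriv

lemma smooth_d2 (hU : IsOpen U) (hf : ContDiffOn ℝ (⊤ : ℕ∞) f U) :
    ContDiffOn ℝ (⊤ : ℕ∞) (d2 f) U := by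
  have h1 : ContDiffOn ℝ (⊤ : ℕ∞) (fun q => fderiv ℝ f q (0, 1)) U :=
    (hf.fderiv_of_isOpen hU le_rfl).clm_apply contDiffOn_const
  exact h1.congr fun q hq => (hasDeriv2 hU hf hq).deriv

lemma d1_congr (hU : IsOpen U) (hfg : ∀ q ∈ U, f q = g q) (hp : p ∈ U) : d1 f p = d1 g p := by
  apply Filter.EventuallyEq.deriv_eq
  filter_upwards [ev1 hU hp] with s hs using hfg _ hs

lemma d2_congr (hU : IsOpen U) (hfg : ∀ q ∈ U, f q = g q) (hp : p ∈ U) : d2 f p = d2 g p := by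
  apply Filter.EventuallyEq.deriv_eq
  filter_upwards [ev2 hU hp] with t ht using hfg _ ht

lemma clairaut (hU : IsOpen U) (hf : ContDiffOn ℝ (⊤ : ℕ∞) f U) (hp : p ∈ U) :
    d1 (d2 f) p = d2 (d1 f) p := by
  have hsym : IsSymmSndFDerivAt ℝ f p :=
    (hf.contDiffAt (hU.mem_nhds hp)).isSymmSndFDerivAt (by rw [minSmoothness_of_isRCLikeNormedField]; exact WithTop.coe_le_coe.mpr (le_top : (2 : ℕ∞) ≤ ⊤))
  have hf' : ContDiffOn ℝ (⊤ : ℕ∞) (fderiv ℝ f) U := hf.fderiv_of_isOpen hU le_rfl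
  have hdf : DifferentiableAt ℝ (fderiv ℝ f) p :=
    (hf'.contDiffAt (hU.mem_nhds hp)).differentiableAt (by decide)
  have key : ∀ v : ℝ × ℝ, HasFDerivAt (fun q => fderiv ℝ f q v)
      ((ContinuousLinearMap.apply ℝ ℝ v).comp (fderiv ℝ (fderiv ℝ f) p)) p := fun v =>
    (ContinuousLinearMap.apply ℝ ℝ v).hasFDerivAt.comp p hdf.hasFDerivAt
  have e1 : d1 (d2 f) p = fderiv ℝ (d2 f) p (1, 0) := (hasDeriv1 hU (smooth_d2 hU hf) hp).deriv
  have e2 : d2 (d1 f) p = fderiv ℝ (d1 f) p (0, 1) := (hasDeriv2 hU (smooth_d1 hU hf) hp).deriv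
  have c1 : fderiv ℝ (d2 f) p = fderiv ℝ (fun q => fderiv ℝ f q (0, 1)) p := by
    apply Filter.EventuallyEq.fderiv_eq
    filter_upwards [hU.mem_nhds hp] with q hq using (hasDeriv2 hU hf hq).deriv
  have c2 : fderiv ℝ (d1 f) p = fderiv ℝ (fun q => fderiv ℝ f q (1, 0)) p := by
    apply Filter.EventuallyEq.fderiv_eq
    filter_upwards [hU.mem_nhds hp] with q hq using (hasDeriv1 hU hf hq).deriv
  rw [e1, e2, c1, c2, (key ((0 : ℝ), (1 : ℝ))).fderiv, (key ((1 : ℝ), (0 : ℝ))).fderiv]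
  simpa using hsym (1, 0) (0, 1)

end Toolkit

section Main

variable {U : Set (ℝ × ℝ)} {w : ℝ × ℝ → ℝ} {p : ℝ × ℝ}

/-- Assembly: to prove cosymmetry it suffices to exhibit `B`, `C` with
`d1 γ + h·d2 γ = B` on `U`, `d2 B = C` on `U`, `d2 C = 0` on `U`. -/
lemma cosym_of {γ B C : ℝ × ℝ → ℝ} (hU : IsOpen U)
    (hAB : ∀ q ∈ U, d1 γ q + d2 (d2 w) q * d2 γ q = B q)
    (hB : ∀ q ∈ U, d2 B q = C q)
    (hC : ∀ q ∈ U, d2 C q = 0) : IsCosymOn w γ U := by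
  intro p hp
  have h2 : ∀ q ∈ U, d2 (fun q => d1 γ q + d2 (d2 w) q * d2 γ q) q = C q :=
    fun q hq => (d2_congr hU hAB hq).trans (hB q hq)
  exact (d2_congr hU h2 hp).trans (hC p hp)

variable (hU : IsOpen U) (hred : IsRedSolOn w U)

section Facts
include hU hred

lemma hw : ContDiffOn ℝ (⊤ : ℕ∞) w U := hred.1
lemma hw1 : ContDiffOn ℝ (⊤ : ℕ∞) (d1 w) U := smooth_d1 hU hred.1
lemma hw2 : ContDiffOn ℝ (⊤ : ℕ∞) (d2 w) U := smooth_d2 hU hred.1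
lemma hh : ContDiffOn ℝ (⊤ : ℕ∞) (d2 (d2 w)) U := smooth_d2 hU (hw2 hU hred)
lemma hw11 : ContDiffOn ℝ (⊤ : ℕ∞) (d1 (d1 w)) U := smooth_d1 hU (hw1 hU hred)
lemma hw12 : ContDiffOn ℝ (⊤ : ℕ∞) (d1 (d2 w)) U := smooth_d1 hU (hw2 hU hred)
lemma hz : ContDiffOn ℝ (⊤ : ℕ∞) (zetaInt w) U :=
  (hw12 hU hred).add (contDiffOn_const.mul ((hh hU hred).pow 2))
lemma hdz1 : ContDiffOn ℝ (⊤ : ℕ∞) (d1 (zetaInt w)) U := smooth_d1 hU (hz hU hred)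

/-- Burgers rewrite. -/
lemma hb (hp : p ∈ U) :
    d1 (d2 (d2 w)) p = -(d2 (d2 w) p * d2 (d2 (d2 w)) p) := by
  have := hred.2 p hp; linarith

/-- `∂₂ζ = 0` on `U`. -/
lemma fact_zd2 (hp : p ∈ U) : d2 (zetaInt w) p = 0 := by
  have T := (hasD2 hU (hw12 hU hred) hp).add
    (((hasD2 hU (hh hU hred) hp).pow 2).const_mul (1/2 : ℝ))
  have e : d2 (zetaInt w) p
      = d2 (d1 (d2 w)) p + d2 (d2 w) p * d2 (d2 (d2 w)) p := T.deriv.trans (by try simp only [id_eq, theta0, Prod.mk.eta]; try ring)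
  rw [e, ← clairaut hU (hw2 hU hred) hp, hb hU hred hp]; ring

/-- `∂₂∂₁w = ∂₁∂₂w` on `U`. -/
lemma fact_w21 (hp : p ∈ U) : d2 (d1 w) p = d1 (d2 w) p := (clairaut hU hred.1 hp).symm

/-- `∂₂∂₁ζ = 0` on `U`. -/
lemma fact_zd12 (hp : p ∈ U) : d2 (d1 (zetaInt w)) p = 0 := by
  rw [← clairaut hU (hz hU hred) hp]
  have e : d1 (d2 (zetaInt w)) p = d1 (fun _ : ℝ × ℝ => (0:ℝ)) p :=
    d1_congr hU (fun r hr => fact_zd2 hU hred hr) hp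
  rw [e]; simp [d1]

/-- `∂₂∂₁∂₁w = ∂₁ζ − (∂₂²w)·∂₁∂₂²w` on `U`. -/
lemma keyW11 (hp : p ∈ U) :
    d2 (d1 (d1 w)) p = d1 (zetaInt w) p - d2 (d2 w) p * d1 (d2 (d2 w)) p := by
  have s1 : d2 (d1 (d1 w)) p = d1 (d2 (d1 w)) p := (clairaut hU (hw1 hU hred) hp).symm
  have s2 : d1 (d2 (d1 w)) p = d1 (d1 (d2 w)) p :=
    d1_congr hU (fun r hr => fact_w21 hU hred hr) hp
  have s3 : d1 (d1 (d2 w)) p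
      = d1 (fun r => zetaInt w r - 1/2 * (d2 (d2 w) r)^2) p :=
    d1_congr hU (fun r _ => by simp only [zetaInt]; ring) hp
  have T := (hasD1 hU (hz hU hred) hp).sub
    (((hasD1 hU (hh hU hred) hp).pow 2).const_mul (1/2 : ℝ))
  have s4 : d1 (fun r => zetaInt w r - 1/2 * (d2 (d2 w) r)^2) p
      = d1 (zetaInt w) p - d2 (d2 w) p * d1 (d2 (d2 w)) p := T.deriv.trans (by try simp only [id_eq, theta0, Prod.mk.eta]; try ring)
  rw [s1, s2, s3, s4]

end Facts

end Main

section Parts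

variable {U : Set (ℝ × ℝ)} {w : ℝ × ℝ → ℝ}
variable (hU : IsOpen U) (hred : IsRedSolOn w U)
include hU hred

set_option linter.unusedSectionVars false

lemma part1 : IsCosymOn w (fun p => d2 w p - (1 / 2) * p.1 * (d2 (d2 w) p) ^ 2) U := by
  refine cosym_of (B := zetaInt w) (C := fun _ => (0:ℝ)) hU ?_ ?_ ?_
  · intro q hq
    have T1 := (hasD1 hU (hw2 hU hred) hq).sub
      (((hasDerivAt_id q.1).const_mul ((1:ℝ)/2)).mul ((hasD1 hU (hh hU hred) hq).pow 2))
    have e1 : d1 (fun p => d2 w p - (1 / 2) * p.1 * (d2 (d2 w) p) ^ 2) q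
        = d1 (d2 w) q - 1/2 * (d2 (d2 w) q)^2
          - q.1 * d2 (d2 w) q * d1 (d2 (d2 w)) q := T1.deriv.trans (by try simp only [id_eq, theta0, Prod.mk.eta, Pi.pow_apply, Pi.sub_apply, Pi.mul_apply, Pi.add_apply]; try ring)
    have T2 := (hasD2 hU (hw2 hU hred) hq).sub
      (((hasD2 hU (hh hU hred) hq).pow 2).const_mul ((1:ℝ)/2 * q.1))
    have e2 : d2 (fun p => d2 w p - (1 / 2) * p.1 * (d2 (d2 w) p) ^ 2) q
        = d2 (d2 w) q - q.1 * d2 (d2 w) q * d2 (d2 (d2 w)) q := T2.deriv.trans (by try simp only [id_eq, theta0, Prod.mk.eta]; try ring)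
    rw [e1, e2, hb hU hred hq]
    simp only [zetaInt]; ring
  · intro q hq; simpa using fact_zd2 hU hred hq
  · intro q hq; simp [d2]

lemma part2 : IsCosymOn w (fun p =>
    (d2 w p - (1 / 2) * p.1 * (d2 (d2 w) p) ^ 2) * d2 (d2 w) p - p.2 * zetaInt w p) U := by
  refine cosym_of (B := fun q => -(q.2 * d1 (zetaInt w) q))
    (C := fun q => -(d1 (zetaInt w) q)) hU ?_ ?_ ?_
  · intro q hq
    have Tg1 := (hasD1 hU (hw2 hU hred) hq).sub
      (((hasDerivAt_id q.1).const_mul ((1:ℝ)/2)).mul ((hasD1 hU (hh hU hred) hq).pow 2))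
    have T1 := (Tg1.mul (hasD1 hU (hh hU hred) hq)).sub
      ((hasD1 hU (hz hU hred) hq).const_mul q.2)
    have e1 : d1 (fun p =>
          (d2 w p - (1 / 2) * p.1 * (d2 (d2 w) p) ^ 2) * d2 (d2 w) p - p.2 * zetaInt w p) q
        = (d1 (d2 w) q - 1/2 * (d2 (d2 w) q)^2 - q.1 * d2 (d2 w) q * d1 (d2 (d2 w)) q)
            * d2 (d2 w) q
          + (d2 w q - 1/2 * q.1 * (d2 (d2 w) q)^2) * d1 (d2 (d2 w)) q
          - q.2 * d1 (zetaInt w) q := T1.deriv.trans (by try simp only [id_eq, theta0, Prod.mk.eta, Pi.pow_apply, Pi.sub_apply, Pi.mul_apply, Pi.add_apply]; try ring)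
    have Tg2 := (hasD2 hU (hw2 hU hred) hq).sub
      (((hasD2 hU (hh hU hred) hq).pow 2).const_mul ((1:ℝ)/2 * q.1))
    have T2 := (Tg2.mul (hasD2 hU (hh hU hred) hq)).sub
      ((hasDerivAt_id q.2).mul (hasD2 hU (hz hU hred) hq))
    have e2 : d2 (fun p =>
          (d2 w p - (1 / 2) * p.1 * (d2 (d2 w) p) ^ 2) * d2 (d2 w) p - p.2 * zetaInt w p) q
        = (d2 (d2 w) q - q.1 * d2 (d2 w) q * d2 (d2 (d2 w)) q) * d2 (d2 w) q
          + (d2 w q - 1/2 * q.1 * (d2 (d2 w) q)^2) * d2 (d2 (d2 w)) q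
          - (zetaInt w q + q.2 * d2 (zetaInt w) q) := T2.deriv.trans (by try simp only [id_eq, theta0, Prod.mk.eta, Pi.pow_apply, Pi.sub_apply, Pi.mul_apply, Pi.add_apply]; try ring)
    rw [e1, e2, hb hU hred hq, fact_zd2 hU hred hq]
    simp only [zetaInt]; ring
  · intro q hq
    have T := ((hasDerivAt_id q.2).mul (hasD2 hU (hdz1 hU hred) hq)).neg
    have e : d2 (fun q => -(q.2 * d1 (zetaInt w) q)) q
        = -(d1 (zetaInt w) q + q.2 * d2 (d1 (zetaInt w)) q) := T.deriv.trans (by try simp only [id_eq, theta0, Prod.mk.eta]; try ring)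
    rw [e, fact_zd12 hU hred hq]; ring
  · intro q hq
    have T := (hasD2 hU (hdz1 hU hred) hq).neg
    have e : d2 (fun q => -(d1 (zetaInt w) q)) q
        = -(d2 (d1 (zetaInt w)) q) := T.deriv.trans (by try simp only [id_eq, theta0, Prod.mk.eta]; try ring)
    rw [e, fact_zd12 hU hred hq]; ring

lemma part3 : IsCosymOn w (fun p =>
    d1 w p - p.2 * zetaInt w p + (1 / 6) * p.1 * (d2 (d2 w) p) ^ 3) U := by
  refine cosym_of
    (B := fun q => d1 (d1 w) q - q.2 * d1 (zetaInt w) q - 1/3 * (d2 (d2 w) q)^3)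
    (C := fun _ => (0:ℝ)) hU ?_ ?_ ?_
  · intro q hq
    have T1 := ((hasD1 hU (hw1 hU hred) hq).sub
        ((hasD1 hU (hz hU hred) hq).const_mul q.2)).add
      (((hasDerivAt_id q.1).const_mul ((1:ℝ)/6)).mul ((hasD1 hU (hh hU hred) hq).pow 3))
    have e1 : d1 (fun p =>
          d1 w p - p.2 * zetaInt w p + (1 / 6) * p.1 * (d2 (d2 w) p) ^ 3) q
        = d1 (d1 w) q - q.2 * d1 (zetaInt w) q + 1/6 * (d2 (d2 w) q)^3
          + 1/2 * q.1 * (d2 (d2 w) q)^2 * d1 (d2 (d2 w)) q := T1.deriv.trans (by try simp only [id_eq, theta0, Prod.mk.eta, Pi.pow_apply, Pi.sub_apply, Pi.mul_apply, Pi.add_apply]; try ring)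
    have T2 := ((hasD2 hU (hw1 hU hred) hq).sub
        ((hasDerivAt_id q.2).mul (hasD2 hU (hz hU hred) hq))).add
      (((hasD2 hU (hh hU hred) hq).pow 3).const_mul ((1:ℝ)/6 * q.1))
    have e2 : d2 (fun p =>
          d1 w p - p.2 * zetaInt w p + (1 / 6) * p.1 * (d2 (d2 w) p) ^ 3) q
        = d2 (d1 w) q - zetaInt w q - q.2 * d2 (zetaInt w) q
          + 1/2 * q.1 * (d2 (d2 w) q)^2 * d2 (d2 (d2 w)) q := T2.deriv.trans (by try simp only [id_eq, theta0, Prod.mk.eta]; try ring)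
    rw [e1, e2, fact_w21 hU hred hq, fact_zd2 hU hred hq, hb hU hred hq]
    simp only [zetaInt]; ring
  · intro q hq
    have T := (((hasD2 hU (hw11 hU hred) hq).sub
        ((hasDerivAt_id q.2).mul (hasD2 hU (hdz1 hU hred) hq))).sub
      (((hasD2 hU (hh hU hred) hq).pow 3).const_mul ((1:ℝ)/3)))
    have e : d2 (fun q => d1 (d1 w) q - q.2 * d1 (zetaInt w) q - 1/3 * (d2 (d2 w) q)^3) q
        = d2 (d1 (d1 w)) q - (d1 (zetaInt w) q + q.2 * d2 (d1 (zetaInt w)) q)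
          - (d2 (d2 w) q)^2 * d2 (d2 (d2 w)) q := T.deriv.trans (by try simp only [id_eq, theta0, Prod.mk.eta]; try ring)
    rw [e, keyW11 hU hred hq, fact_zd12 hU hred hq, hb hU hred hq]; ring
  · intro q hq; simp [d2]

lemma part4 : IsCosymOn w (fun p =>
    p.1 * (d1 w p - p.2 * zetaInt w p) + p.2 * d2 w p - w p
      + (1 / 12) * p.1 ^ 2 * (d2 (d2 w) p) ^ 3
      - (1 / 4) * p.2 ^ 2 * d2 (d2 w) p) U := by
  refine cosym_of
    (B := fun q => q.1 * (d1 (d1 w) q - 1/3 * (d2 (d2 w) q)^3)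
      - q.1 * q.2 * d1 (zetaInt w) q)
    (C := fun _ => (0:ℝ)) hU ?_ ?_ ?_
  · intro q hq
    have T1 := (((((hasDerivAt_id q.1).mul ((hasD1 hU (hw1 hU hred) hq).sub
        ((hasD1 hU (hz hU hred) hq).const_mul q.2))).add
        ((hasD1 hU (hw2 hU hred) hq).const_mul q.2)).sub
        (hasD1 hU hred.1 hq)).add
        ((((hasDerivAt_id q.1).pow 2).const_mul ((1:ℝ)/12)).mul
          ((hasD1 hU (hh hU hred) hq).pow 3))).sub
        ((hasD1 hU (hh hU hred) hq).const_mul ((1:ℝ)/4 * q.2^2))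
    have e1 : d1 (fun p =>
          p.1 * (d1 w p - p.2 * zetaInt w p) + p.2 * d2 w p - w p
            + (1 / 12) * p.1 ^ 2 * (d2 (d2 w) p) ^ 3
            - (1 / 4) * p.2 ^ 2 * d2 (d2 w) p) q
        = (d1 w q - q.2 * zetaInt w q)
          + q.1 * (d1 (d1 w) q - q.2 * d1 (zetaInt w) q)
          + q.2 * d1 (d2 w) q - d1 w q
          + 1/6 * q.1 * (d2 (d2 w) q)^3
          + 1/4 * q.1^2 * (d2 (d2 w) q)^2 * d1 (d2 (d2 w)) q
          - 1/4 * q.2^2 * d1 (d2 (d2 w)) q := T1.deriv.trans (by try simp only [id_eq, theta0, Prod.mk.eta, Pi.pow_apply, Pi.sub_apply, Pi.mul_apply, Pi.add_apply]; try ring)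
    have T2 := ((((((hasD2 hU (hw1 hU hred) hq).sub
        ((hasDerivAt_id q.2).mul (hasD2 hU (hz hU hred) hq))).const_mul q.1).add
        ((hasDerivAt_id q.2).mul (hasD2 hU (hw2 hU hred) hq))).sub
        (hasD2 hU hred.1 hq)).add
        (((hasD2 hU (hh hU hred) hq).pow 3).const_mul ((1:ℝ)/12 * q.1^2))).sub
        ((((hasDerivAt_id q.2).pow 2).const_mul ((1:ℝ)/4)).mul (hasD2 hU (hh hU hred) hq))
    have e2 : d2 (fun p =>
          p.1 * (d1 w p - p.2 * zetaInt w p) + p.2 * d2 w p - w p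
            + (1 / 12) * p.1 ^ 2 * (d2 (d2 w) p) ^ 3
            - (1 / 4) * p.2 ^ 2 * d2 (d2 w) p) q
        = q.1 * (d2 (d1 w) q - zetaInt w q - q.2 * d2 (zetaInt w) q)
          + (d2 w q + q.2 * d2 (d2 w) q) - d2 w q
          + 1/4 * q.1^2 * (d2 (d2 w) q)^2 * d2 (d2 (d2 w)) q
          - (1/2 * q.2 * d2 (d2 w) q + 1/4 * q.2^2 * d2 (d2 (d2 w)) q) :=
      T2.deriv.trans (by try simp only [id_eq, theta0, Prod.mk.eta, Pi.pow_apply, Pi.sub_apply, Pi.mul_apply, Pi.add_apply]; try ring)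
    rw [e1, e2, fact_w21 hU hred hq, fact_zd2 hU hred hq, hb hU hred hq]
    simp only [zetaInt]; ring
  · intro q hq
    have T := (((hasD2 hU (hw11 hU hred) hq).sub
        (((hasD2 hU (hh hU hred) hq).pow 3).const_mul ((1:ℝ)/3))).const_mul q.1).sub
      ((((hasDerivAt_id q.2).const_mul q.1)).mul (hasD2 hU (hdz1 hU hred) hq))
    have e : d2 (fun q => q.1 * (d1 (d1 w) q - 1/3 * (d2 (d2 w) q)^3)
          - q.1 * q.2 * d1 (zetaInt w) q) q
        = q.1 * (d2 (d1 (d1 w)) q - (d2 (d2 w) q)^2 * d2 (d2 (d2 w)) q)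
          - (q.1 * d1 (zetaInt w) q + q.1 * q.2 * d2 (d1 (zetaInt w)) q) :=
      T.deriv.trans (by try simp only [id_eq, theta0, Prod.mk.eta]; try ring)
    rw [e, keyW11 hU hred hq, fact_zd12 hU hred hq, hb hU hred hq]; ring
  · intro q hq; simp [d2]

lemma part5 : IsCosymOn w (fun p =>
    (d2 w p - (1 / 2) * p.1 * (d2 (d2 w) p) ^ 2) * theta0 w p
      + p.1 * p.2 * zetaInt w p) U := by
  refine cosym_of
    (B := fun q => 2 * q.2 * zetaInt w q + q.1 * q.2 * d1 (zetaInt w) q)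
    (C := fun q => 2 * zetaInt w q + q.1 * d1 (zetaInt w) q) hU ?_ ?_ ?_
  · intro q hq
    have Tg1 := (hasD1 hU (hw2 hU hred) hq).sub
      (((hasDerivAt_id q.1).const_mul ((1:ℝ)/2)).mul ((hasD1 hU (hh hU hred) hq).pow 2))
    have Tθ1 : HasDerivAt (fun s => theta0 w (s, q.2))
        (0 - (1 * d2 (d2 w) q + q.1 * d1 (d2 (d2 w)) q)) q.1 :=
      (hasDerivAt_const q.1 q.2).sub ((hasDerivAt_id q.1).mul (hasD1 hU (hh hU hred) hq))
    have T1 := (Tg1.mul Tθ1).add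
      (((hasDerivAt_id q.1).mul_const q.2).mul (hasD1 hU (hz hU hred) hq))
    have e1 : d1 (fun p =>
          (d2 w p - (1 / 2) * p.1 * (d2 (d2 w) p) ^ 2) * theta0 w p
            + p.1 * p.2 * zetaInt w p) q
        = (d1 (d2 w) q - 1/2 * (d2 (d2 w) q)^2 - q.1 * d2 (d2 w) q * d1 (d2 (d2 w)) q)
            * (q.2 - q.1 * d2 (d2 w) q)
          + (d2 w q - 1/2 * q.1 * (d2 (d2 w) q)^2)
            * (-(d2 (d2 w) q) - q.1 * d1 (d2 (d2 w)) q)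
          + q.2 * zetaInt w q + q.1 * q.2 * d1 (zetaInt w) q :=
      T1.deriv.trans (by try simp only [id_eq, theta0, Prod.mk.eta, Pi.pow_apply, Pi.sub_apply, Pi.mul_apply, Pi.add_apply]; try ring)
    have Tg2 := (hasD2 hU (hw2 hU hred) hq).sub
      (((hasD2 hU (hh hU hred) hq).pow 2).const_mul ((1:ℝ)/2 * q.1))
    have Tθ2 : HasDerivAt (fun t => theta0 w (q.1, t))
        (1 - q.1 * d2 (d2 (d2 w)) q) q.2 :=
      (hasDerivAt_id q.2).sub ((hasD2 hU (hh hU hred) hq).const_mul q.1)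
    have T2 := (Tg2.mul Tθ2).add
      (((hasDerivAt_id q.2).const_mul q.1).mul (hasD2 hU (hz hU hred) hq))
    have e2 : d2 (fun p =>
          (d2 w p - (1 / 2) * p.1 * (d2 (d2 w) p) ^ 2) * theta0 w p
            + p.1 * p.2 * zetaInt w p) q
        = (d2 (d2 w) q - q.1 * d2 (d2 w) q * d2 (d2 (d2 w)) q) * (q.2 - q.1 * d2 (d2 w) q)
          + (d2 w q - 1/2 * q.1 * (d2 (d2 w) q)^2) * (1 - q.1 * d2 (d2 (d2 w)) q)
          + q.1 * zetaInt w q + q.1 * q.2 * d2 (zetaInt w) q :=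
      T2.deriv.trans (by try simp only [id_eq, theta0, Prod.mk.eta, Pi.pow_apply, Pi.sub_apply, Pi.mul_apply, Pi.add_apply]; try ring)
    rw [e1, e2, fact_zd2 hU hred hq, hb hU hred hq]
    simp only [zetaInt]; ring
  · intro q hq
    have T := (((hasDerivAt_id q.2).const_mul (2:ℝ)).mul (hasD2 hU (hz hU hred) hq)).add
      (((hasDerivAt_id q.2).const_mul q.1).mul (hasD2 hU (hdz1 hU hred) hq))
    have e : d2 (fun q => 2 * q.2 * zetaInt w q + q.1 * q.2 * d1 (zetaInt w) q) q
        = 2 * zetaInt w q + 2 * q.2 * d2 (zetaInt w) q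
          + q.1 * d1 (zetaInt w) q + q.1 * q.2 * d2 (d1 (zetaInt w)) q :=
      T.deriv.trans (by try simp only [id_eq, theta0, Prod.mk.eta]; try ring)
    rw [e, fact_zd2 hU hred hq, fact_zd12 hU hred hq]; ring
  · intro q hq
    have T := ((hasD2 hU (hz hU hred) hq).const_mul (2:ℝ)).add
      ((hasD2 hU (hdz1 hU hred) hq).const_mul q.1)
    have e : d2 (fun q => 2 * zetaInt w q + q.1 * d1 (zetaInt w) q) q
        = 2 * d2 (zetaInt w) q + q.1 * d2 (d1 (zetaInt w)) q := T.deriv.trans (by try simp only [id_eq, theta0, Prod.mk.eta]; try ring)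
    rw [e, fact_zd2 hU hred hq, fact_zd12 hU hred hq]; ring

end Parts

/-- Five particular cosymmetries of the reduced equation along `w`. -/
theorem statement11 (U : Set (ℝ × ℝ)) (hU : IsOpen U) (w : ℝ × ℝ → ℝ)
    (hred : IsRedSolOn w U) :
    IsCosymOn w (fun p => d2 w p - (1 / 2) * p.1 * (d2 (d2 w) p) ^ 2) U ∧
    IsCosymOn w (fun p =>
      (d2 w p - (1 / 2) * p.1 * (d2 (d2 w) p) ^ 2) * d2 (d2 w) p - p.2 * zetaInt w p) U ∧
    IsCosymOn w (fun p =>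
      d1 w p - p.2 * zetaInt w p + (1 / 6) * p.1 * (d2 (d2 w) p) ^ 3) U ∧
    IsCosymOn w (fun p =>
      p.1 * (d1 w p - p.2 * zetaInt w p) + p.2 * d2 w p - w p
        + (1 / 12) * p.1 ^ 2 * (d2 (d2 w) p) ^ 3
        - (1 / 4) * p.2 ^ 2 * d2 (d2 w) p) U ∧
    IsCosymOn w (fun p =>
      (d2 w p - (1 / 2) * p.1 * (d2 (d2 w) p) ^ 2) * theta0 w p
        + p.1 * p.2 * zetaInt w p) U :=
  ⟨part1 hU hred, part2 hU hred, part3 hU hred, part4 hU hred, part5 hU hred⟩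
end

section
/- Let U ⊆ ℝ² be open and w : U → ℝ a smooth solution of the reduced equation. Then the functions I¹ := ∂₁∂₂w + ½(∂₂²w)² and I² := ∂₁²w − (1/3)(∂₂²w)³ − z₂·(∂₁²∂₂w + (∂₂²w)·(∂₁∂₂²w)) satisfy ∂₂I¹ = 0 and ∂₂I² = 0 on U; i.e. I¹ and I² are z₂-integrals of the reduced equation. -/
open Filter Topology

lemma hasDerivAt_line1 {f : ℝ × ℝ → ℝ} {p : ℝ × ℝ} (hf : DifferentiableAt ℝ f p) :
    HasDerivAt (fun s => f (s, p.2)) (fderiv ℝ f p (1, 0)) p.1 := by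
  have h1 : HasDerivAt (fun s : ℝ => (s, p.2)) ((1 : ℝ), (0 : ℝ)) p.1 :=
    (hasDerivAt_id p.1).prodMk (hasDerivAt_const p.1 p.2)
  exact (hf.hasFDerivAt.comp_hasDerivAt p.1 h1)

lemma hasDerivAt_line2 {f : ℝ × ℝ → ℝ} {p : ℝ × ℝ} (hf : DifferentiableAt ℝ f p) :
    HasDerivAt (fun s => f (p.1, s)) (fderiv ℝ f p (0, 1)) p.2 := by
  have h1 : HasDerivAt (fun s : ℝ => (p.1, s)) ((0 : ℝ), (1 : ℝ)) p.2 :=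
    (hasDerivAt_const p.2 p.1).prodMk (hasDerivAt_id p.2)
  exact (hf.hasFDerivAt.comp_hasDerivAt p.2 h1)

lemma d1_eq {f : ℝ × ℝ → ℝ} {p : ℝ × ℝ} (hf : DifferentiableAt ℝ f p) :
    d1 f p = fderiv ℝ f p (1, 0) := (hasDerivAt_line1 hf).deriv

lemma d2_eq {f : ℝ × ℝ → ℝ} {p : ℝ × ℝ} (hf : DifferentiableAt ℝ f p) :
    d2 f p = fderiv ℝ f p (0, 1) := (hasDerivAt_line2 hf).deriv

lemma hasDerivAt_d1 {f : ℝ × ℝ → ℝ} {p : ℝ × ℝ} (hf : DifferentiableAt ℝ f p) :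
    HasDerivAt (fun s => f (s, p.2)) (d1 f p) p.1 := by
  rw [d1_eq hf]; exact hasDerivAt_line1 hf

lemma hasDerivAt_d2 {f : ℝ × ℝ → ℝ} {p : ℝ × ℝ} (hf : DifferentiableAt ℝ f p) :
    HasDerivAt (fun s => f (p.1, s)) (d2 f p) p.2 := by
  rw [d2_eq hf]; exact hasDerivAt_line2 hf

lemma diffAt_of_contDiffOn {f : ℝ × ℝ → ℝ} {U : Set (ℝ × ℝ)} {p : ℝ × ℝ}
    (hU : IsOpen U) (hf : ContDiffOn ℝ (⊤ : ℕ∞) f U) (hp : p ∈ U) :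
    DifferentiableAt ℝ f p :=
  ((hf.contDiffAt (hU.mem_nhds hp)).differentiableAt (by norm_cast))

lemma contDiffOn_fderiv_apply {f : ℝ × ℝ → ℝ} {U : Set (ℝ × ℝ)} (hU : IsOpen U)
    (hf : ContDiffOn ℝ (⊤ : ℕ∞) f U) (v : ℝ × ℝ) :
    ContDiffOn ℝ (⊤ : ℕ∞) (fun q => fderiv ℝ f q v) U := by
  have hF : ContDiffOn ℝ (⊤ : ℕ∞) (fderiv ℝ f) U :=
    hf.fderiv_of_isOpen hU (by simp)
  exact hF.clm_apply contDiffOn_const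

lemma d1_contDiffOn {f : ℝ × ℝ → ℝ} {U : Set (ℝ × ℝ)} (hU : IsOpen U)
    (hf : ContDiffOn ℝ (⊤ : ℕ∞) f U) : ContDiffOn ℝ (⊤ : ℕ∞) (d1 f) U :=
  (contDiffOn_fderiv_apply hU hf (1, 0)).congr fun p hp =>
    d1_eq (diffAt_of_contDiffOn hU hf hp)

lemma d2_contDiffOn {f : ℝ × ℝ → ℝ} {U : Set (ℝ × ℝ)} (hU : IsOpen U)
    (hf : ContDiffOn ℝ (⊤ : ℕ∞) f U) : ContDiffOn ℝ (⊤ : ℕ∞) (d2 f) U :=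
  (contDiffOn_fderiv_apply hU hf (0, 1)).congr fun p hp =>
    d2_eq (diffAt_of_contDiffOn hU hf hp)

lemma d1_congr_nhds {f g : ℝ × ℝ → ℝ} {p : ℝ × ℝ} (h : f =ᶠ[𝓝 p] g) : d1 f p = d1 g p := by
  apply Filter.EventuallyEq.deriv_eq
  have hc : ContinuousAt (fun s : ℝ => (s, p.2)) p.1 := by fun_prop
  exact h.comp_tendsto hc

lemma d2_congr_nhds {f g : ℝ × ℝ → ℝ} {p : ℝ × ℝ} (h : f =ᶠ[𝓝 p] g) : d2 f p = d2 g p := by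
  apply Filter.EventuallyEq.deriv_eq
  have hc : ContinuousAt (fun s : ℝ => (p.1, s)) p.2 := by fun_prop
  exact h.comp_tendsto hc

lemma eventuallyEq_of_eqOn {f g : ℝ × ℝ → ℝ} {U : Set (ℝ × ℝ)} {p : ℝ × ℝ}
    (hU : IsOpen U) (h : Set.EqOn f g U) (hp : p ∈ U) : f =ᶠ[𝓝 p] g :=
  Filter.eventuallyEq_of_mem (hU.mem_nhds hp) h

lemma d1_d2_comm {f : ℝ × ℝ → ℝ} {U : Set (ℝ × ℝ)} {p : ℝ × ℝ} (hU : IsOpen U)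
    (hf : ContDiffOn ℝ (⊤ : ℕ∞) f U) (hp : p ∈ U) : d1 (d2 f) p = d2 (d1 f) p := by
  have hF : ContDiffOn ℝ (⊤ : ℕ∞) (fderiv ℝ f) U := hf.fderiv_of_isOpen hU (by simp)
  have hFd : DifferentiableAt ℝ (fderiv ℝ f) p :=
    (hF.contDiffAt (hU.mem_nhds hp)).differentiableAt (by norm_cast)
  have symm : IsSymmSndFDerivAt ℝ f p :=
    (hf.contDiffAt (hU.mem_nhds hp)).isSymmSndFDerivAt (by simp only [minSmoothness_of_isRCLikeNormedField]; norm_cast)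
  have key : ∀ v u : ℝ × ℝ, fderiv ℝ (fun q => fderiv ℝ f q v) p u = fderiv ℝ (fderiv ℝ f) p u v := by
    intro v u
    rw [fderiv_clm_apply hFd (differentiableAt_const v)]
    simp
  have e2 : d2 f =ᶠ[𝓝 p] fun q => fderiv ℝ f q (0, 1) := by
    filter_upwards [hU.mem_nhds hp] with q hq
    exact d2_eq (diffAt_of_contDiffOn hU hf hq)
  have e1 : d1 f =ᶠ[𝓝 p] fun q => fderiv ℝ f q (1, 0) := by
    filter_upwards [hU.mem_nhds hp] with q hq
    exact d1_eq (diffAt_of_contDiffOn hU hf hq)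
  have hd2 : DifferentiableAt ℝ (fun q => fderiv ℝ f q ((0 : ℝ), (1 : ℝ))) p :=
    hFd.clm_apply (differentiableAt_const _)
  have hd1 : DifferentiableAt ℝ (fun q => fderiv ℝ f q ((1 : ℝ), (0 : ℝ))) p :=
    hFd.clm_apply (differentiableAt_const _)
  calc d1 (d2 f) p = d1 (fun q => fderiv ℝ f q (0, 1)) p := d1_congr_nhds e2
    _ = fderiv ℝ (fun q => fderiv ℝ f q (0, 1)) p (1, 0) := d1_eq hd2
    _ = fderiv ℝ (fderiv ℝ f) p (1, 0) (0, 1) := key _ _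
    _ = fderiv ℝ (fderiv ℝ f) p (0, 1) (1, 0) := symm _ _
    _ = fderiv ℝ (fun q => fderiv ℝ f q (1, 0)) p (0, 1) := (key _ _).symm
    _ = d2 (fun q => fderiv ℝ f q (1, 0)) p := (d2_eq hd1).symm
    _ = d2 (d1 f) p := (d2_congr_nhds e1).symm

/-- The differential functions `I¹ = ∂₁∂₂w + ½(∂₂²w)²` and
`I² = ∂₁²w − ⅓(∂₂²w)³ − z₂·(∂₁²∂₂w + (∂₂²w)·(∂₁∂₂²w))` are `z₂`-integrals of the reduced
equation along any smooth solution `w` on an open set `U`. -/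
theorem statement14 (U : Set (ℝ × ℝ)) (hU : IsOpen U) (w : ℝ × ℝ → ℝ)
    (hred : IsRedSolOn w U) :
    (∀ p ∈ U, d2 (fun q => d1 (d2 w) q + (1 / 2) * (d2 (d2 w) q) ^ 2) p = 0) ∧
    (∀ p ∈ U, d2 (fun q => d1 (d1 w) q - (1 / 3) * (d2 (d2 w) q) ^ 3
        - q.2 * (d1 (d1 (d2 w)) q + d2 (d2 w) q * d1 (d2 (d2 w)) q)) p = 0) := by
  obtain ⟨hw, heq⟩ := hred
  have hw2 : ContDiffOn ℝ (⊤ : ℕ∞) (d2 w) U := d2_contDiffOn hU hw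
  have hw22 : ContDiffOn ℝ (⊤ : ℕ∞) (d2 (d2 w)) U := d2_contDiffOn hU hw2
  have hw222 : ContDiffOn ℝ (⊤ : ℕ∞) (d2 (d2 (d2 w))) U := d2_contDiffOn hU hw22
  have hw1 : ContDiffOn ℝ (⊤ : ℕ∞) (d1 w) U := d1_contDiffOn hU hw
  have hw12 : ContDiffOn ℝ (⊤ : ℕ∞) (d1 (d2 w)) U := d1_contDiffOn hU hw2
  have hw11 : ContDiffOn ℝ (⊤ : ℕ∞) (d1 (d1 w)) U := d1_contDiffOn hU hw1
  have hw122 : ContDiffOn ℝ (⊤ : ℕ∞) (d1 (d2 (d2 w))) U := d1_contDiffOn hU hw22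
  have hw112 : ContDiffOn ℝ (⊤ : ℕ∞) (d1 (d1 (d2 w))) U := d1_contDiffOn hU hw12
  -- reduced equation as an `EqOn`
  have hR : Set.EqOn (d1 (d2 (d2 w)))
      (fun q => -(d2 (d2 w) q * d2 (d2 (d2 w)) q)) U := by
    intro q hq
    have := heq q hq
    simp only
    linarith
  constructor
  · intro p hp
    have dA : DifferentiableAt ℝ (d1 (d2 w)) p := diffAt_of_contDiffOn hU hw12 hp
    have dB : DifferentiableAt ℝ (d2 (d2 w)) p := diffAt_of_contDiffOn hU hw22 hp
    have h : HasDerivAt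
        (fun s => d1 (d2 w) (p.1, s) + (1 / 2) * (d2 (d2 w) (p.1, s)) ^ 2)
        (d2 (d1 (d2 w)) p + (1 / 2) *
          ((2 : ℕ) * d2 (d2 w) p ^ (2 - 1) * d2 (d2 (d2 w)) p)) p.2 :=
      (hasDerivAt_d2 dA).add (((hasDerivAt_d2 dB).pow 2).const_mul (1 / 2))
    have e : d2 (fun q => d1 (d2 w) q + (1 / 2) * (d2 (d2 w) q) ^ 2) p
        = d2 (d1 (d2 w)) p + (1 / 2) *
          ((2 : ℕ) * d2 (d2 w) p ^ (2 - 1) * d2 (d2 (d2 w)) p) := h.deriv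
    rw [e, ← d1_d2_comm hU hw2 hp]
    have hrp := heq p hp
    simp only [pow_one, Nat.cast_ofNat]
    push_cast
    nlinarith [hrp]
  · intro p hp
    have dA : DifferentiableAt ℝ (d1 (d1 w)) p := diffAt_of_contDiffOn hU hw11 hp
    have dB : DifferentiableAt ℝ (d2 (d2 w)) p := diffAt_of_contDiffOn hU hw22 hp
    have dC : DifferentiableAt ℝ (d2 (d2 (d2 w))) p := diffAt_of_contDiffOn hU hw222 hp
    have dG : DifferentiableAt ℝ (d1 (d1 (d2 w))) p := diffAt_of_contDiffOn hU hw112 hp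
    have dH : DifferentiableAt ℝ
        (fun q => d2 (d2 w) q * d1 (d2 (d2 w)) q) p :=
      (diffAt_of_contDiffOn hU (hw22.mul hw122) hp)
    have dE : DifferentiableAt ℝ
        (fun q => d1 (d1 (d2 w)) q + d2 (d2 w) q * d1 (d2 (d2 w)) q) p :=
      (diffAt_of_contDiffOn hU (hw112.add (hw22.mul hw122)) hp)
    -- value of d1 (d2 (d2 w)) at p
    have hrp : d1 (d2 (d2 w)) p = -(d2 (d2 w) p * d2 (d2 (d2 w)) p) := hR hp
    -- (a) swap:  d2 (d1 (d1 w)) p = d1 (d1 (d2 w)) p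
    have hA : d2 (d1 (d1 w)) p = d1 (d1 (d2 w)) p := by
      rw [← d1_d2_comm hU hw1 hp]
      exact d1_congr_nhds
        (eventuallyEq_of_eqOn hU (fun q hq => (d1_d2_comm hU hw hq).symm) hp)
    -- (c1) d2 of G := d1 (d1 (d2 w))
    have hG : d2 (d1 (d1 (d2 w))) p =
        -(-(d2 (d2 w) p * d2 (d2 (d2 w)) p) * d2 (d2 (d2 w)) p +
          d2 (d2 w) p * d1 (d2 (d2 (d2 w))) p) := by
      have s1 : d2 (d1 (d1 (d2 w))) p = d1 (d2 (d1 (d2 w))) p :=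
        (d1_d2_comm hU hw12 hp).symm
      have s2 : Set.EqOn (d2 (d1 (d2 w)))
          (fun q => -(d2 (d2 w) q * d2 (d2 (d2 w)) q)) U := by
        intro q hq
        have := (d1_d2_comm hU hw2 hq).symm
        simp only
        rw [this]
        exact hR hq
      have s3 : d1 (d2 (d1 (d2 w))) p =
          d1 (fun q => -(d2 (d2 w) q * d2 (d2 (d2 w)) q)) p :=
        d1_congr_nhds (eventuallyEq_of_eqOn hU s2 hp)
      have s4 : HasDerivAt
          (fun s => -(d2 (d2 w) (s, p.2) * d2 (d2 (d2 w)) (s, p.2)))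
          (-(d1 (d2 (d2 w)) p * d2 (d2 (d2 w)) p +
            d2 (d2 w) p * d1 (d2 (d2 (d2 w))) p)) p.1 :=
        ((hasDerivAt_d1 dB).mul (hasDerivAt_d1 dC)).neg
      have s5 : d1 (fun q => -(d2 (d2 w) q * d2 (d2 (d2 w)) q)) p =
          -(d1 (d2 (d2 w)) p * d2 (d2 (d2 w)) p +
            d2 (d2 w) p * d1 (d2 (d2 (d2 w))) p) := s4.deriv
      rw [s1, s3, s5, hrp]
    -- value of d1 (d2 (d2 (d2 w))) p
    have hC1 : d1 (d2 (d2 (d2 w))) p =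
        -(d2 (d2 (d2 w)) p * d2 (d2 (d2 w)) p +
          d2 (d2 w) p * d2 (d2 (d2 (d2 w))) p) := by
      have s1 : d1 (d2 (d2 (d2 w))) p = d2 (d1 (d2 (d2 w))) p :=
        d1_d2_comm hU hw22 hp
      have s2 : d2 (d1 (d2 (d2 w))) p =
          d2 (fun q => -(d2 (d2 w) q * d2 (d2 (d2 w)) q)) p :=
        d2_congr_nhds (eventuallyEq_of_eqOn hU hR hp)
      have s3 : HasDerivAt
          (fun s => -(d2 (d2 w) (p.1, s) * d2 (d2 (d2 w)) (p.1, s)))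
          (-(d2 (d2 (d2 w)) p * d2 (d2 (d2 w)) p +
            d2 (d2 w) p * d2 (d2 (d2 (d2 w))) p)) p.2 :=
        ((hasDerivAt_d2 dB).mul (hasDerivAt_d2 dC)).neg
      rw [s1, s2]
      exact s3.deriv
    -- (c2) d2 of H := (d2 (d2 w)) * d1 (d2 (d2 w))
    have hH : d2 (fun q => d2 (d2 w) q * d1 (d2 (d2 w)) q) p =
        -(d2 (d2 (d2 w)) p * (d2 (d2 w) p * d2 (d2 (d2 w)) p) +
          d2 (d2 w) p * (d2 (d2 (d2 w)) p * d2 (d2 (d2 w)) p +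
            d2 (d2 w) p * d2 (d2 (d2 (d2 w))) p)) := by
      have s2 : Set.EqOn (fun q => d2 (d2 w) q * d1 (d2 (d2 w)) q)
          (fun q => d2 (d2 w) q * -(d2 (d2 w) q * d2 (d2 (d2 w)) q)) U := by
        intro q hq
        simp only
        rw [hR hq]
      have s3 : HasDerivAt
          (fun s => d2 (d2 w) (p.1, s) *
            -(d2 (d2 w) (p.1, s) * d2 (d2 (d2 w)) (p.1, s)))
          (d2 (d2 (d2 w)) p * -(d2 (d2 w) p * d2 (d2 (d2 w)) p) +
            d2 (d2 w) p * -(d2 (d2 (d2 w)) p * d2 (d2 (d2 w)) p +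
              d2 (d2 w) p * d2 (d2 (d2 (d2 w))) p)) p.2 :=
        (hasDerivAt_d2 dB).mul (((hasDerivAt_d2 dB).mul (hasDerivAt_d2 dC)).neg)
      have e2 : d2 (fun q => d2 (d2 w) q * -(d2 (d2 w) q * d2 (d2 (d2 w)) q)) p =
          d2 (d2 (d2 w)) p * -(d2 (d2 w) p * d2 (d2 (d2 w)) p) +
            d2 (d2 w) p * -(d2 (d2 (d2 w)) p * d2 (d2 (d2 w)) p +
              d2 (d2 w) p * d2 (d2 (d2 (d2 w))) p) := s3.deriv
      rw [d2_congr_nhds (eventuallyEq_of_eqOn hU s2 hp), e2]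
      ring
    -- (c) d2 E p = 0
    have hdE : d2 (fun q => d1 (d1 (d2 w)) q + d2 (d2 w) q * d1 (d2 (d2 w)) q) p = 0 := by
      have dH2 : DifferentiableAt ℝ
          (fun q => d2 (d2 w) q * d1 (d2 (d2 w)) q) p := dH
      have s : HasDerivAt
          (fun s => d1 (d1 (d2 w)) (p.1, s) +
            (fun q => d2 (d2 w) q * d1 (d2 (d2 w)) q) (p.1, s))
          (d2 (d1 (d1 (d2 w))) p +
            d2 (fun q => d2 (d2 w) q * d1 (d2 (d2 w)) q) p) p.2 :=
        (hasDerivAt_d2 dG).add (hasDerivAt_d2 dH2)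
      have e : d2 (fun q => d1 (d1 (d2 w)) q + d2 (d2 w) q * d1 (d2 (d2 w)) q) p =
          d2 (d1 (d1 (d2 w))) p +
            d2 (fun q => d2 (d2 w) q * d1 (d2 (d2 w)) q) p := s.deriv
      rw [e, hG, hH, hC1]
      ring
    -- main derivative computation
    have h : HasDerivAt
        (fun s => d1 (d1 w) (p.1, s) - (1 / 3) * (d2 (d2 w) (p.1, s)) ^ 3
          - s * ((fun q => d1 (d1 (d2 w)) q + d2 (d2 w) q * d1 (d2 (d2 w)) q) (p.1, s)))
        (d2 (d1 (d1 w)) p - (1 / 3) *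
            ((3 : ℕ) * d2 (d2 w) p ^ (3 - 1) * d2 (d2 (d2 w)) p)
          - (1 * ((fun q => d1 (d1 (d2 w)) q + d2 (d2 w) q * d1 (d2 (d2 w)) q) (p.1, p.2))
            + p.2 * d2 (fun q => d1 (d1 (d2 w)) q + d2 (d2 w) q * d1 (d2 (d2 w)) q) p)) p.2 :=
      (((hasDerivAt_d2 dA).sub (((hasDerivAt_d2 dB).pow 3).const_mul (1 / 3)))).sub
        ((hasDerivAt_id p.2).mul (hasDerivAt_d2 dE))
    have e : d2 (fun q => d1 (d1 w) q - (1 / 3) * (d2 (d2 w) q) ^ 3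
          - q.2 * (d1 (d1 (d2 w)) q + d2 (d2 w) q * d1 (d2 (d2 w)) q)) p
        = d2 (d1 (d1 w)) p - (1 / 3) *
            ((3 : ℕ) * d2 (d2 w) p ^ (3 - 1) * d2 (d2 (d2 w)) p)
          - (1 * ((fun q => d1 (d1 (d2 w)) q + d2 (d2 w) q * d1 (d2 (d2 w)) q) (p.1, p.2))
            + p.2 * d2 (fun q => d1 (d1 (d2 w)) q + d2 (d2 w) q * d1 (d2 (d2 w)) q) p) := h.deriv
    rw [e, hdE, hA]
    have hpp : ((p.1, p.2) : ℝ × ℝ) = p := rfl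
    simp only [hpp, hrp]
    push_cast
    ring
end
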